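/- arXiv:1807.01804 — 4 statements merged into one kernel-verified Lean document; each statement's English description precedes it below -/
import Mathlib

section
/- Let X_1,…,X_n be random variables with Σ_i E[X_i] = m, and suppose there is a constant C > 0 such that for each i, E[X_i]² ≤ E[X_i²] ≤ p_i·C where p = (p_1,…,p_n) is a probability distribution. Then C ≥ m²/‖p‖_{1/2}, where ‖p‖_{1/2} = (Σ_i √p_i)². -/
/-- Abstract stationarity bound: if `∑ E[X i] = m` and for each `i`,
`E[X i]² ≤ E[X i²] ≤ p i * C` for a probability distribution `p` and constant `C > 0`,
then `C ≥ m² / ‖p‖_{1/2}` where `‖p‖_{1/2} = (∑ √(p i))²`. -/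
theorem stationary_second_moment_lower (n : ℕ) (m C : ℝ) (e s p : Fin n → ℝ)
    (hp0 : ∀ i, 0 ≤ p i) (hp1 : ∑ i, p i = 1) (hC : 0 < C)
    (he : ∑ i, e i = m)
    (h1 : ∀ i, (e i) ^ 2 ≤ s i) (h2 : ∀ i, s i ≤ p i * C) :
    m ^ 2 / (∑ i, Real.sqrt (p i)) ^ 2 ≤ C := by
  set S := ∑ i, Real.sqrt (p i) with hS
  have hSnn : 0 ≤ S := Finset.sum_nonneg fun i _ => Real.sqrt_nonneg _
  have hSpos : 0 < S := by
    rcases lt_or_eq_of_le hSnn with h | h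
    · exact h
    · exfalso
      have : ∀ i ∈ Finset.univ, Real.sqrt (p i) = 0 := by
        intro i _
        exact le_antisymm (by
          have := Finset.single_le_sum (f := fun i => Real.sqrt (p i))
            (fun i _ => Real.sqrt_nonneg _) (Finset.mem_univ i)
          linarith) (Real.sqrt_nonneg _)
      have hpz : ∀ i, p i = 0 := fun i =>
        (Real.sqrt_eq_zero (hp0 i)).mp (this i (Finset.mem_univ i))
      simp [hpz] at hp1
  have hm : |m| ≤ S * Real.sqrt C := by
    calc |m| = |∑ i, e i| := by rw [he]
      _ ≤ ∑ i, |e i| := Finset.abs_sum_le_sum_abs _ _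
      _ ≤ ∑ i, Real.sqrt (p i) * Real.sqrt C := by
          apply Finset.sum_le_sum
          intro i _
          have h3 : (e i) ^ 2 ≤ p i * C := le_trans (h1 i) (h2 i)
          have := Real.sqrt_le_sqrt h3
          rw [Real.sqrt_sq_eq_abs, Real.sqrt_mul (hp0 i)] at this
          exact this
      _ = S * Real.sqrt C := by rw [← Finset.sum_mul]
  have hm2 : m ^ 2 ≤ S ^ 2 * C := by
    have := mul_self_le_mul_self (abs_nonneg m) hm
    calc m ^ 2 = |m| * |m| := by rw [abs_mul_abs_self]; ring
      _ ≤ (S * Real.sqrt C) * (S * Real.sqrt C) := this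
      _ = S ^ 2 * (Real.sqrt C * Real.sqrt C) := by ring
      _ = S ^ 2 * C := by rw [Real.mul_self_sqrt hC.le]
  rw [div_le_iff₀ (pow_pos hSpos 2)]
  linarith
end

section
/- Let p be a probability distribution on n bins and X a configuration of m balls (X_j ≥ 0 integers, Σ X_j = m). Define Z(X) = Σ_j X_j²/p_j (assuming all p_j > 0). If bin ℓ is emptied and its X_ℓ = r balls are rethrown i.i.d. according to p, then the expected value of Z of the new configuration equals Z(X) − (1 + 1/p_ℓ)·r² + (2m + n − 1)·r. -/
/-- Potential-function computation: if bin `ℓ` of configuration `X` (with `m` balls,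
`X ℓ = r`) is emptied and its `r` balls are rethrown i.i.d. according to `p` — so the
vector `B` of landing counts satisfies `∑ j, B j = r`, `E[B j] = p j r` and
`E[(B j)²] = p j (1 - p j) r + p j² r²` — then for `Z(X) = ∑ j, X j²/p j`, the expected
value of `Z` of the new configuration equals
`Z(X) - (1 + 1/p ℓ) r² + (2m + n - 1) r`. -/
theorem expected_potential_after_recycle (n m : ℕ) (p : Fin n → ℝ)
    (hp : ∀ j, 0 < p j) (hp1 : ∑ j, p j = 1)
    (X : Fin n → ℕ) (hX : ∑ j, X j = m) (ℓ : Fin n) (r : ℕ) (hr : X ℓ = r)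
    (α : Type*) [Fintype α] (w : α → ℝ) (B : Fin n → α → ℕ)
    (hw0 : ∀ a, 0 ≤ w a) (hw1 : ∑ a, w a = 1)
    (hBsum : ∀ a, ∑ j, B j a = r)
    (hB1 : ∀ j, ∑ a, w a * (B j a : ℝ) = p j * r)
    (hB2 : ∀ j, ∑ a, w a * (B j a : ℝ) ^ 2 = p j * (1 - p j) * r + (p j) ^ 2 * (r : ℝ) ^ 2) :
    ∑ a, w a * (∑ j, (if j = ℓ then (B j a : ℝ) else (X j : ℝ) + (B j a : ℝ)) ^ 2 / p j)
      = (∑ j, (X j : ℝ) ^ 2 / p j) - (1 + 1 / p ℓ) * (r : ℝ) ^ 2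
        + (2 * m + n - 1) * r := by
  have hpne : ∀ j, p j ≠ 0 := fun j => (hp j).ne'
  have h1 : ∑ j, (X j : ℝ) = (m : ℝ) := by exact_mod_cast congrArg (Nat.cast : ℕ → ℝ) hX
  simp only [Finset.mul_sum]
  rw [Finset.sum_comm]
  have key : ∀ j : Fin n,
      ∑ a, w a * ((if j = ℓ then (B j a : ℝ) else (X j : ℝ) + (B j a : ℝ)) ^ 2 / p j)
      = ((X j : ℝ) ^ 2 / p j + 2 * (X j : ℝ) * r + (1 - p j) * r + p j * (r : ℝ) ^ 2)
        - (if j = ℓ then (X j : ℝ) ^ 2 / p j + 2 * (X j : ℝ) * r else 0) := by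
    intro j
    by_cases h : j = ℓ
    · subst h
      simp only [eq_self_iff_true, if_true]
      have e : ∑ a, w a * ((B j a : ℝ) ^ 2 / p j)
          = (p j * (1 - p j) * r + (p j) ^ 2 * (r : ℝ) ^ 2) / p j := by
        rw [← hB2 j, Finset.sum_div]
        exact Finset.sum_congr rfl fun a _ => (mul_div_assoc _ _ _).symm
      rw [e]
      have hXr : (X j : ℝ) = (r : ℝ) := by exact_mod_cast congrArg (Nat.cast : ℕ → ℝ) hr
      rw [hXr]
      have hj := hpne j
      field_simp
      ring
    · simp only [if_neg h]
      have expand : ∀ a ∈ Finset.univ, w a * (((X j : ℝ) + (B j a : ℝ)) ^ 2 / p j)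
          = ((X j : ℝ) ^ 2 * w a + 2 * (X j : ℝ) * (w a * (B j a : ℝ))
              + w a * (B j a : ℝ) ^ 2) / p j := by
        intro a _; ring
      rw [Finset.sum_congr rfl expand, ← Finset.sum_div, Finset.sum_add_distrib,
        Finset.sum_add_distrib, ← Finset.mul_sum, ← Finset.mul_sum, hw1, hB1 j, hB2 j]
      have hj := hpne j
      field_simp
      ring
  rw [Finset.sum_congr rfl fun j _ => key j, Finset.sum_sub_distrib]
  have hite : ∑ j, (if j = ℓ then (X j : ℝ) ^ 2 / p j + 2 * (X j : ℝ) * r else 0)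
      = (X ℓ : ℝ) ^ 2 / p ℓ + 2 * (X ℓ : ℝ) * r := by
    rw [Finset.sum_ite_eq' Finset.univ ℓ]
    exact if_pos (Finset.mem_univ ℓ)
  have hmain : ∑ j, ((X j : ℝ) ^ 2 / p j + 2 * (X j : ℝ) * r + (1 - p j) * r
        + p j * (r : ℝ) ^ 2)
      = (∑ j, (X j : ℝ) ^ 2 / p j) + 2 * m * r + (n - 1) * r + (r : ℝ) ^ 2 := by
    simp only [Finset.sum_add_distrib]
    rw [← Finset.sum_mul, ← Finset.sum_mul, ← Finset.sum_mul, ← Finset.mul_sum, h1,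
      Finset.sum_sub_distrib, hp1, Finset.sum_const, Finset.card_univ, Fintype.card_fin,
      nsmul_eq_mul, mul_one]
    ring
  rw [hite, hmain]
  have hXr : (X ℓ : ℝ) = (r : ℝ) := by exact_mod_cast congrArg (Nat.cast : ℕ → ℝ) hr
  rw [hXr]
  ring
end

section
/- Let χ be the stationary distribution of the Random Ball strategy on the uniform ball-recycling game with m balls and n bins, let R(χ) be the number of balls recycled in one step, and R = E[R(χ)]. Then E[R(χ)²]/R = (2m + n − 1)/(n + 1) ≤ 1 + 2m/n. -/
open Finset

/-- A configuration of `m` balls in `n` bins. -/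
abbrev Config (n m : ℕ) := {X : Fin n → Fin (m + 1) // ∑ i, (X i : ℕ) = m}

/-- Probability that rethrowing `r` balls i.i.d. according to `p` produces landing
counts `d` (multinomial probability). -/
noncomputable def throwProb {n : ℕ} (p : Fin n → ℝ) (r : ℕ) (d : Fin n → ℕ) : ℝ :=
  if ∑ j, d j = r then (r.factorial : ℝ) * ∏ j, p j ^ d j / ((d j).factorial : ℝ) else 0

/-- One-step transition probability of a (stateless, possibly randomized) recycling
strategy `σ`: pick a bin `b` with probability `σ X b`, empty it, and rethrow its balls
i.i.d. according to `p`. -/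
noncomputable def transStep {n m : ℕ} (p : Fin n → ℝ)
    (σ : Config n m → Fin n → ℝ) (X Y : Config n m) : ℝ :=
  ∑ b, σ X b *
    (if ∀ j, j ≠ b → (X.1 j : ℕ) ≤ (Y.1 j : ℕ) then
      throwProb p (X.1 b : ℕ)
        (fun j => (Y.1 j : ℕ) - if j = b then 0 else (X.1 j : ℕ))
     else 0)

/-- `σ` is a valid recycling strategy: it gives a probability distribution over bins
and only picks non-empty bins. -/
def IsStrategy {n m : ℕ} (σ : Config n m → Fin n → ℝ) : Prop :=
  (∀ X b, 0 ≤ σ X b) ∧ (∀ X, ∑ b, σ X b = 1) ∧ (∀ X b, σ X b ≠ 0 → (X.1 b : ℕ) ≠ 0)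

/-- `π` is a stationary distribution of the chain induced by strategy `σ`. -/
def IsStationaryDist {n m : ℕ} (p : Fin n → ℝ) (σ : Config n m → Fin n → ℝ)
    (π : Config n m → ℝ) : Prop :=
  (∀ X, 0 ≤ π X) ∧ (∑ X, π X = 1) ∧ (∀ Y, ∑ X, π X * transStep p σ X Y = π Y)


namespace RandomBallAux

/-- weight of a landing-count vector under the uniform distribution `1/n`. -/
noncomputable def W (n : ℕ) (d : Fin n → ℕ) : ℝ :=
  ∏ j, ((1:ℝ)/n) ^ d j / ((d j).factorial : ℝ)

lemma mom0 (n : ℕ) (hn : 0 < n) (r : ℕ) :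
    ∑ d ∈ piAntidiag (univ : Finset (Fin n)) r, W n d = 1 / (r.factorial : ℝ) := by
  have h := Finset.sum_pow_eq_sum_piAntidiag (univ : Finset (Fin n)) (fun _ => (1:ℝ)/n) r
  have hsum : ∑ _i : Fin n, (1:ℝ)/n = 1 := by
    rw [Finset.sum_const, card_univ, Fintype.card_fin, nsmul_eq_mul]
    field_simp
  rw [hsum, one_pow] at h
  have key : ∀ d ∈ piAntidiag (univ : Finset (Fin n)) r,
      (Nat.multinomial univ d : ℝ) * ∏ i, ((1:ℝ)/n) ^ d i = (r.factorial : ℝ) * W n d := by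
    intro d hd
    rw [mem_piAntidiag] at hd
    have hs := Nat.multinomial_spec (univ : Finset (Fin n)) d
    rw [hd.1] at hs
    have hs' : ((∏ i, (d i).factorial : ℕ) : ℝ) * (Nat.multinomial univ d : ℝ)
        = (r.factorial : ℝ) := by exact_mod_cast congrArg (Nat.cast : ℕ → ℝ) hs
    have hne : ((∏ i, (d i).factorial : ℕ) : ℝ) ≠ 0 := by
      positivity
    unfold W
    rw [Finset.prod_div_distrib]
    push_cast at hs' ⊢
    rw [← hs']
    field_simp
  rw [Finset.sum_congr rfl key, ← Finset.mul_sum] at h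
  have hfac : (r.factorial : ℝ) ≠ 0 := by positivity
  field_simp at h ⊢
  linarith [h]

end RandomBallAux

namespace RandomBallAux

lemma W_update (n : ℕ) (d : Fin n → ℕ) (j : Fin n) :
    W n (Function.update d j (d j + 1)) = W n d * ((1:ℝ)/n) / ((d j : ℝ) + 1) := by
  unfold W
  rw [← Finset.prod_erase_mul (a := j) (h := mem_univ j),
      ← Finset.prod_erase_mul (a := j) (h := mem_univ j) (f := fun i => ((1:ℝ)/n) ^ d i / ((d i).factorial : ℝ))]
  have h1 : ∀ i ∈ (univ : Finset (Fin n)).erase j,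
      ((1:ℝ)/n) ^ (Function.update d j (d j + 1) i) / ((Function.update d j (d j + 1) i).factorial : ℝ)
      = ((1:ℝ)/n) ^ d i / ((d i).factorial : ℝ) := by
    intro i hi
    rw [Function.update_of_ne (Finset.ne_of_mem_erase hi)]
  rw [Finset.prod_congr rfl h1, Function.update_self]
  have : (((d j + 1).factorial : ℕ) : ℝ) = ((d j : ℝ) + 1) * ((d j).factorial : ℝ) := by
    rw [Nat.factorial_succ]; push_cast; ring
  rw [this, pow_succ]
  have h2 : ((d j : ℝ) + 1) ≠ 0 := by positivity
  have h3 : ((d j).factorial : ℝ) ≠ 0 := by positivity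
  field_simp

lemma shift (n : ℕ) (w : ℕ → ℝ) (j : Fin n) (r : ℕ) :
    ∑ d ∈ piAntidiag (univ : Finset (Fin n)) (r+1), W n d * (d j : ℝ) * w (d j)
      = (1/n) * ∑ d ∈ piAntidiag (univ : Finset (Fin n)) r, W n d * w (d j + 1) := by
  classical
  rw [Finset.mul_sum]
  rw [← Finset.sum_filter_of_ne (p := fun d => d j ≠ 0)
    (by intro d _ hne h0; exact hne (by simp [h0]))]
  refine Finset.sum_bij' (fun d _ => Function.update d j (d j - 1))
    (fun e _ => Function.update e j (e j + 1)) ?_ ?_ ?_ ?_ ?_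
  · intro d hd
    rw [Finset.mem_filter, mem_piAntidiag] at hd
    rw [mem_piAntidiag]
    refine ⟨?_, fun i _ => mem_univ i⟩
    rw [Finset.sum_update_of_mem (mem_univ j)]
    have h1 : ∑ i ∈ (univ : Finset (Fin n)) \ {j}, d i + d j = r + 1 := by
      rw [← Finset.sum_eq_sum_sdiff_singleton_add (mem_univ j) d]; exact hd.1.1
    have h3 := hd.2
    omega
  · intro e he
    rw [mem_piAntidiag] at he
    rw [Finset.mem_filter, mem_piAntidiag]
    refine ⟨⟨?_, fun i _ => mem_univ i⟩, by simp⟩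
    rw [Finset.sum_update_of_mem (mem_univ j)]
    have h1 : ∑ i ∈ (univ : Finset (Fin n)) \ {j}, e i + e j = r := by
      rw [← Finset.sum_eq_sum_sdiff_singleton_add (mem_univ j) e]; exact he.1
    omega
  · intro d hd
    rw [Finset.mem_filter] at hd
    show Function.update (Function.update d j (d j - 1)) j (Function.update d j (d j - 1) j + 1) = d
    rw [Function.update_self, Function.update_idem]
    have : d j - 1 + 1 = d j := by omega
    rw [this, Function.update_eq_self]
  · intro e _
    show Function.update (Function.update e j (e j + 1)) j (Function.update e j (e j + 1) j - 1) = e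
    rw [Function.update_self, Function.update_idem, Nat.add_sub_cancel, Function.update_eq_self]
  · intro d hd
    rw [Finset.mem_filter] at hd
    have hdj : d j ≠ 0 := hd.2
    set e := Function.update d j (d j - 1) with he
    have hej : e j = d j - 1 := by rw [he, Function.update_self]
    have hde : Function.update e j (e j + 1) = d := by
      rw [he, Function.update_idem, Function.update_self]
      have : d j - 1 + 1 = d j := by omega
      rw [this, Function.update_eq_self]
    have hW : W n d = W n e * ((1:ℝ)/n) / ((e j : ℝ) + 1) := by
      rw [← hde, W_update]
    have hcast : ((e j : ℝ) + 1) = (d j : ℝ) := by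
      rw [hej]; have : d j - 1 + 1 = d j := by omega
      exact_mod_cast congrArg (Nat.cast : ℕ → ℝ) this
    have hwj : e j + 1 = d j := by omega
    have hdj' : (d j : ℝ) ≠ 0 := by exact_mod_cast hdj
    show W n d * (d j : ℝ) * w (d j) = 1/(n:ℝ) * (W n e * w (e j + 1))
    rw [hW, hcast, hwj, div_mul_cancel₀ _ hdj']
    ring

end RandomBallAux


namespace RandomBallAux

lemma tp_eq (n : ℕ) (r : ℕ) (d : Fin n → ℕ) (hd : d ∈ piAntidiag (univ : Finset (Fin n)) r) :
    throwProb (fun _ : Fin n => (1:ℝ)/n) r d = (r.factorial : ℝ) * W n d := by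
  rw [mem_piAntidiag] at hd
  rw [throwProb, if_pos hd.1, W]

lemma mom1 (n : ℕ) (hn : 0 < n) (j : Fin n) (r : ℕ) :
    ∑ d ∈ piAntidiag (univ : Finset (Fin n)) r, W n d * (d j : ℝ)
      = (r : ℝ) / (n * r.factorial) := by
  cases r with
  | zero => simp
  | succ k =>
    have h := shift n (fun _ => 1) j k
    simp only [mul_one] at h
    rw [h, mom0 n hn k, Nat.factorial_succ]
    have h1 : (n:ℝ) ≠ 0 := by positivity
    have h2 : (k.factorial : ℝ) ≠ 0 := by positivity
    have h3 : ((k:ℝ) + 1) ≠ 0 := by positivity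
    push_cast
    field_simp

lemma mom2 (n : ℕ) (hn : 0 < n) (j : Fin n) (r : ℕ) :
    ∑ d ∈ piAntidiag (univ : Finset (Fin n)) r, W n d * (d j : ℝ) * ((d j : ℝ) - 1)
      = (r : ℝ) * ((r : ℝ) - 1) / ((n:ℝ)^2 * r.factorial) := by
  cases r with
  | zero => simp
  | succ k =>
    have h := shift n (fun x => (x:ℝ) - 1) j k
    rw [h]
    have h4 : ∀ d ∈ piAntidiag (univ : Finset (Fin n)) k,
        W n d * ((↑(d j + 1) : ℝ) - 1) = W n d * (d j : ℝ) := by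
      intro d _
      push_cast
      ring
    rw [Finset.sum_congr rfl h4, mom1 n hn j k, Nat.factorial_succ]
    have h1 : (n:ℝ) ≠ 0 := by positivity
    have h2 : (k.factorial : ℝ) ≠ 0 := by positivity
    push_cast
    field_simp
    ring

lemma tp0 (n : ℕ) (hn : 0 < n) (r : ℕ) :
    ∑ d ∈ piAntidiag (univ : Finset (Fin n)) r,
      throwProb (fun _ : Fin n => (1:ℝ)/n) r d = 1 := by
  rw [Finset.sum_congr rfl (fun d hd => tp_eq n r d hd), ← Finset.mul_sum, mom0 n hn r]
  have h2 : (r.factorial : ℝ) ≠ 0 := by positivity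
  field_simp

lemma tp1 (n : ℕ) (hn : 0 < n) (j : Fin n) (r : ℕ) :
    ∑ d ∈ piAntidiag (univ : Finset (Fin n)) r,
      throwProb (fun _ : Fin n => (1:ℝ)/n) r d * (d j : ℝ) = (r : ℝ) / n := by
  have h : ∀ d ∈ piAntidiag (univ : Finset (Fin n)) r,
      throwProb (fun _ : Fin n => (1:ℝ)/n) r d * (d j : ℝ)
        = (r.factorial : ℝ) * (W n d * (d j : ℝ)) := by
    intro d hd
    rw [tp_eq n r d hd]
    ring
  rw [Finset.sum_congr rfl h, ← Finset.mul_sum, mom1 n hn j r]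
  have h1 : (n:ℝ) ≠ 0 := by positivity
  have h2 : (r.factorial : ℝ) ≠ 0 := by positivity
  field_simp

lemma tp2 (n : ℕ) (hn : 0 < n) (j : Fin n) (r : ℕ) :
    ∑ d ∈ piAntidiag (univ : Finset (Fin n)) r,
      throwProb (fun _ : Fin n => (1:ℝ)/n) r d * (d j : ℝ) * ((d j : ℝ) - 1)
      = (r : ℝ) * ((r : ℝ) - 1) / (n:ℝ)^2 := by
  have h : ∀ d ∈ piAntidiag (univ : Finset (Fin n)) r,
      throwProb (fun _ : Fin n => (1:ℝ)/n) r d * (d j : ℝ) * ((d j : ℝ) - 1)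
        = (r.factorial : ℝ) * (W n d * (d j : ℝ) * ((d j : ℝ) - 1)) := by
    intro d hd
    rw [tp_eq n r d hd]
    ring
  rw [Finset.sum_congr rfl h, ← Finset.mul_sum, mom2 n hn j r]
  have h1 : (n:ℝ) ≠ 0 := by positivity
  have h2 : (r.factorial : ℝ) ≠ 0 := by positivity
  field_simp

end RandomBallAux

namespace RandomBallAux

lemma chi_le (n m : ℕ) (X : Config n m) (b : Fin n) : (X.1 b : ℕ) ≤ m := by
  conv_rhs => rw [← X.2]
  exact Finset.single_le_sum (f := fun j => (X.1 j : ℕ)) (fun i _ => Nat.zero_le _) (mem_univ b)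

lemma chi_sum' (n m : ℕ) (X : Config n m) (b : Fin n) :
    ∑ j, (if j = b then 0 else (X.1 j : ℕ)) = m - (X.1 b : ℕ) := by
  have key : ∀ j, (X.1 j : ℕ) = (if j = b then 0 else (X.1 j : ℕ))
      + (if j = b then (X.1 j : ℕ) else 0) := by
    intro j; by_cases h : j = b <;> simp [h]
  have h1 : m = ∑ j, (if j = b then 0 else (X.1 j : ℕ)) + (X.1 b : ℕ) := by
    conv_lhs => rw [← X.2]
    rw [Finset.sum_congr rfl (fun j _ => key j), Finset.sum_add_distrib,
      Finset.sum_ite_eq' univ b (fun j => (X.1 j : ℕ))]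
    simp
  omega

lemma bin_sum (n m : ℕ) (hnm : 0 < m) (X : Config n m) (b : Fin n)
    (G : (Fin n → ℕ) → ℝ) :
    ∑ Y : Config n m,
      (if ∀ j, j ≠ b → (X.1 j : ℕ) ≤ (Y.1 j : ℕ) then
        throwProb (fun _ : Fin n => (1:ℝ)/n) (X.1 b : ℕ)
          (fun j => (Y.1 j : ℕ) - if j = b then 0 else (X.1 j : ℕ))
       else 0) * G (fun j => (Y.1 j : ℕ))
    = ∑ d ∈ piAntidiag (univ : Finset (Fin n)) (X.1 b : ℕ),
        throwProb (fun _ : Fin n => (1:ℝ)/n) (X.1 b : ℕ) d *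
          G (fun j => (if j = b then 0 else (X.1 j : ℕ)) + d j) := by
  classical
  simp only [ite_mul, zero_mul]
  rw [← Finset.sum_filter]
  have hle : ∀ (d : Fin n → ℕ), d ∈ piAntidiag (univ : Finset (Fin n)) (X.1 b : ℕ) →
      ∀ j, (if j = b then 0 else (X.1 j : ℕ)) + d j ≤ m := by
    intro d hd j
    rw [mem_piAntidiag] at hd
    have : ∑ i, ((if i = b then 0 else (X.1 i : ℕ)) + d i) = m := by
      rw [Finset.sum_add_distrib, chi_sum' n m X b, hd.1]
      have := chi_le n m X b
      omega
    calc (if j = b then 0 else (X.1 j : ℕ)) + d j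
        ≤ ∑ i, ((if i = b then 0 else (X.1 i : ℕ)) + d i) :=
          Finset.single_le_sum (f := fun i => (if i = b then 0 else (X.1 i : ℕ)) + d i)
            (fun i _ => Nat.zero_le _) (mem_univ j)
      _ = m := this
  refine Finset.sum_bij'
    (fun Y _ => (fun j => (Y.1 j : ℕ) - if j = b then 0 else (X.1 j : ℕ)))
    (fun d hd => (⟨fun j => ⟨(if j = b then 0 else (X.1 j : ℕ)) + d j,
        Nat.lt_succ_of_le (hle d hd j)⟩, by
      simp only
      rw [Finset.sum_add_distrib, chi_sum' n m X b]
      rw [mem_piAntidiag] at hd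
      rw [hd.1]
      have := chi_le n m X b
      omega⟩ : Config n m)) ?_ ?_ ?_ ?_ ?_
  · -- maps into piAntidiag
    intro Y hY
    rw [Finset.mem_filter] at hY
    rw [mem_piAntidiag]
    refine ⟨?_, fun i _ => mem_univ i⟩
    show ∑ j, ((Y.1 j : ℕ) - if j = b then 0 else (X.1 j : ℕ)) = (X.1 b : ℕ)
    have hp : ∀ j, (if j = b then 0 else (X.1 j : ℕ)) ≤ (Y.1 j : ℕ) := by
      intro j
      by_cases h : j = b
      · simp [h]
      · simpa [h] using hY.2 j h
    have h1 : ∑ j, ((Y.1 j : ℕ) - if j = b then 0 else (X.1 j : ℕ))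
        + ∑ j, (if j = b then 0 else (X.1 j : ℕ)) = ∑ j, (Y.1 j : ℕ) := by
      rw [← Finset.sum_add_distrib]
      exact Finset.sum_congr rfl (fun j _ => Nat.sub_add_cancel (hp j))
    rw [chi_sum' n m X b, Y.2] at h1
    have := chi_le n m X b
    omega
  · -- maps into filter
    intro d hd
    rw [Finset.mem_filter]
    refine ⟨mem_univ _, ?_⟩
    intro j hj
    simp only [hj, if_neg hj]
    exact Nat.le_add_right _ _
  · -- left inverse
    intro Y hY
    rw [Finset.mem_filter] at hY
    apply Subtype.ext
    funext j
    apply Fin.ext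
    simp only
    by_cases h : j = b
    · simp [h]
    · have := hY.2 j h
      simp only [if_neg h]
      omega
  · -- right inverse
    intro d _
    funext j
    simp only
    omega
  · -- values agree
    intro Y hY
    rw [Finset.mem_filter] at hY
    congr 1
    congr 1
    funext j
    by_cases h : j = b
    · simp [h]
    · have := hY.2 j h
      simp only [if_neg h]
      omega

end RandomBallAux

namespace RandomBallAux

lemma ite_sq_sum (n m : ℕ) (X : Config n m) (b : Fin n) :
    ∑ j, (((if j = b then 0 else (X.1 j : ℕ)) : ℕ) : ℝ)^2
      = (∑ j, ((X.1 j : ℕ) : ℝ)^2) - ((X.1 b : ℕ) : ℝ)^2 := by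
  have key : ∀ j : Fin n, ((X.1 j : ℕ) : ℝ)^2
      = (((if j = b then 0 else (X.1 j : ℕ)) : ℕ) : ℝ)^2
        + (if j = b then ((X.1 j : ℕ) : ℝ)^2 else 0) := by
    intro j; by_cases h : j = b <;> simp [h]
  rw [Finset.sum_congr rfl (fun j _ => key j), Finset.sum_add_distrib,
    Finset.sum_ite_eq' univ b (fun j => ((X.1 j : ℕ) : ℝ)^2)]
  simp

lemma ite_lin_sum (n m : ℕ) (X : Config n m) (b : Fin n) :
    ∑ j, (((if j = b then 0 else (X.1 j : ℕ)) : ℕ) : ℝ)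
      = (m : ℝ) - ((X.1 b : ℕ) : ℝ) := by
  have h := chi_sum' n m X b
  have hle := chi_le n m X b
  have := congrArg (Nat.cast : ℕ → ℝ) h
  rw [Nat.cast_sum, Nat.cast_sub hle] at this
  exact this

lemma per_bin (n m : ℕ) (hn : 0 < n) (X : Config n m) (b : Fin n) :
    ∑ d ∈ piAntidiag (univ : Finset (Fin n)) (X.1 b : ℕ),
        throwProb (fun _ : Fin n => (1:ℝ)/n) (X.1 b : ℕ) d *
          (∑ j, (((if j = b then 0 else (X.1 j : ℕ)) + d j : ℕ) : ℝ)^2)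
    = (∑ j, ((X.1 j : ℕ) : ℝ)^2) - ((X.1 b : ℕ) : ℝ)^2
      + 2*((X.1 b : ℕ) : ℝ)*((m : ℝ) - ((X.1 b : ℕ) : ℝ))/n
      + ((X.1 b : ℕ) : ℝ)*(((X.1 b : ℕ) : ℝ)-1)/n + ((X.1 b : ℕ) : ℝ) := by
  have hn' : (n : ℝ) ≠ 0 := by positivity
  rw [Finset.sum_congr rfl (fun d _ => Finset.mul_sum _ _ _), Finset.sum_comm]
  have hj : ∀ j : Fin n,
      ∑ d ∈ piAntidiag (univ : Finset (Fin n)) (X.1 b : ℕ),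
        throwProb (fun _ : Fin n => (1:ℝ)/n) (X.1 b : ℕ) d *
          (((if j = b then 0 else (X.1 j : ℕ)) + d j : ℕ) : ℝ)^2
      = (((if j = b then 0 else (X.1 j : ℕ)) : ℕ) : ℝ)^2
        + 2*(((if j = b then 0 else (X.1 j : ℕ)) : ℕ) : ℝ)*(((X.1 b : ℕ) : ℝ)/n)
        + (((X.1 b : ℕ) : ℝ)*(((X.1 b : ℕ) : ℝ)-1)/(n:ℝ)^2 + ((X.1 b : ℕ) : ℝ)/n) := by
    intro j
    have expand : ∀ d ∈ piAntidiag (univ : Finset (Fin n)) (X.1 b : ℕ),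
        throwProb (fun _ : Fin n => (1:ℝ)/n) (X.1 b : ℕ) d *
          (((if j = b then 0 else (X.1 j : ℕ)) + d j : ℕ) : ℝ)^2
        = (((if j = b then 0 else (X.1 j : ℕ)) : ℕ) : ℝ)^2 *
            throwProb (fun _ : Fin n => (1:ℝ)/n) (X.1 b : ℕ) d
          + 2*(((if j = b then 0 else (X.1 j : ℕ)) : ℕ) : ℝ) *
            (throwProb (fun _ : Fin n => (1:ℝ)/n) (X.1 b : ℕ) d * (d j : ℝ))
          + (throwProb (fun _ : Fin n => (1:ℝ)/n) (X.1 b : ℕ) d * (d j : ℝ) * ((d j : ℝ)-1)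
            + throwProb (fun _ : Fin n => (1:ℝ)/n) (X.1 b : ℕ) d * (d j : ℝ)) := by
      intro d _
      push_cast
      ring
    rw [Finset.sum_congr rfl expand, Finset.sum_add_distrib, Finset.sum_add_distrib,
      Finset.sum_add_distrib, ← Finset.mul_sum, ← Finset.mul_sum,
      tp0 n hn (X.1 b : ℕ), tp1 n hn j (X.1 b : ℕ), tp2 n hn j (X.1 b : ℕ)]
    ring
  rw [Finset.sum_congr rfl (fun j _ => hj j), Finset.sum_add_distrib, Finset.sum_add_distrib]
  have e1 : ∑ j : Fin n, (((if j = b then 0 else (X.1 j : ℕ)) : ℕ) : ℝ)^2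
      = (∑ j, ((X.1 j : ℕ) : ℝ)^2) - ((X.1 b : ℕ) : ℝ)^2 := ite_sq_sum n m X b
  have e2 : ∑ j : Fin n, 2*(((if j = b then 0 else (X.1 j : ℕ)) : ℕ) : ℝ)*(((X.1 b : ℕ) : ℝ)/n)
      = 2*((m : ℝ) - ((X.1 b : ℕ) : ℝ))*(((X.1 b : ℕ) : ℝ)/n) := by
    rw [← Finset.sum_mul, ← Finset.mul_sum, ite_lin_sum n m X b]
  have e3 : ∑ _j : Fin n, (((X.1 b : ℕ) : ℝ)*(((X.1 b : ℕ) : ℝ)-1)/(n:ℝ)^2 + ((X.1 b : ℕ) : ℝ)/n)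
      = (n : ℝ) * (((X.1 b : ℕ) : ℝ)*(((X.1 b : ℕ) : ℝ)-1)/(n:ℝ)^2 + ((X.1 b : ℕ) : ℝ)/n) := by
    rw [Finset.sum_const, card_univ, Fintype.card_fin, nsmul_eq_mul]
  rw [e1, e2, e3]
  field_simp
  ring

end RandomBallAux

namespace RandomBallAux

lemma chi_sum_real (n m : ℕ) (X : Config n m) : ∑ b, ((X.1 b : ℕ) : ℝ) = m := by
  exact_mod_cast congrArg (Nat.cast : ℕ → ℝ) X.2

lemma step_moment (n m : ℕ) (hn : 0 < n) (hm : 0 < m) (X : Config n m) :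
    ∑ Y : Config n m, transStep (fun _ : Fin n => (1:ℝ)/n)
        (fun Z c => ((Z.1 c : ℕ) : ℝ)/m) X Y * (∑ j, ((Y.1 j : ℕ) : ℝ)^2)
    = (∑ j, ((X.1 j : ℕ) : ℝ)^2)
      + ∑ b, (((X.1 b : ℕ) : ℝ)/m) *
        ( -((X.1 b : ℕ) : ℝ)^2 + ((X.1 b : ℕ) : ℝ)
          + (2*((X.1 b : ℕ) : ℝ)*((m : ℝ) - ((X.1 b : ℕ) : ℝ))
            + ((X.1 b : ℕ) : ℝ)*(((X.1 b : ℕ) : ℝ)-1))/n) := by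
  have hσ : ∑ b, ((X.1 b : ℕ) : ℝ)/m = 1 := by
    rw [← Finset.sum_div, chi_sum_real n m X]
    have : (m : ℝ) ≠ 0 := by positivity
    field_simp
  simp only [transStep]
  rw [Finset.sum_congr rfl (fun Y _ => Finset.sum_mul _ _ _), Finset.sum_comm]
  have hb : ∀ b : Fin n,
      ∑ Y : Config n m,
        (((X.1 b : ℕ) : ℝ)/m *
          (if ∀ j, j ≠ b → (X.1 j : ℕ) ≤ (Y.1 j : ℕ) then
            throwProb (fun _ : Fin n => (1:ℝ)/n) (X.1 b : ℕ)
              (fun j => (Y.1 j : ℕ) - if j = b then 0 else (X.1 j : ℕ))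
           else 0)) * (∑ j, ((Y.1 j : ℕ) : ℝ)^2)
      = (((X.1 b : ℕ) : ℝ)/m) *
          ((∑ j, ((X.1 j : ℕ) : ℝ)^2) - ((X.1 b : ℕ) : ℝ)^2
            + 2*((X.1 b : ℕ) : ℝ)*((m : ℝ) - ((X.1 b : ℕ) : ℝ))/n
            + ((X.1 b : ℕ) : ℝ)*(((X.1 b : ℕ) : ℝ)-1)/n + ((X.1 b : ℕ) : ℝ)) := by
    intro b
    have hbs := bin_sum n m hm X b (fun c => ∑ j, ((c j : ℕ) : ℝ)^2)
    simp only [] at hbs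
    rw [← per_bin n m hn X b, ← hbs, Finset.mul_sum]
    exact Finset.sum_congr rfl (fun Y _ => by ring)
  rw [Finset.sum_congr rfl (fun b _ => hb b)]
  have expand : ∀ b : Fin n,
      (((X.1 b : ℕ) : ℝ)/m) *
          ((∑ j, ((X.1 j : ℕ) : ℝ)^2) - ((X.1 b : ℕ) : ℝ)^2
            + 2*((X.1 b : ℕ) : ℝ)*((m : ℝ) - ((X.1 b : ℕ) : ℝ))/n
            + ((X.1 b : ℕ) : ℝ)*(((X.1 b : ℕ) : ℝ)-1)/n + ((X.1 b : ℕ) : ℝ))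
      = (((X.1 b : ℕ) : ℝ)/m) * (∑ j, ((X.1 j : ℕ) : ℝ)^2)
        + (((X.1 b : ℕ) : ℝ)/m) *
          ( -((X.1 b : ℕ) : ℝ)^2 + ((X.1 b : ℕ) : ℝ)
            + (2*((X.1 b : ℕ) : ℝ)*((m : ℝ) - ((X.1 b : ℕ) : ℝ))
              + ((X.1 b : ℕ) : ℝ)*(((X.1 b : ℕ) : ℝ)-1))/n) := by
    intro b
    have hn' : (n : ℝ) ≠ 0 := by positivity
    field_simp
    ring
  rw [Finset.sum_congr rfl (fun b _ => expand b), Finset.sum_add_distrib,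
    ← Finset.sum_mul, hσ, one_mul]

end RandomBallAux

/-- Pair-flow identity for Random Ball on the uniform distribution: in a stationary
distribution `π` of the Random Ball strategy (pick a uniformly random ball, recycle its
bin), the ratio of the second moment of the per-round recycle count to its mean equals
`(2m + n - 1)/(n + 1) ≤ 1 + 2m/n`. -/
theorem random_ball_pair_flow (n m : ℕ) (hn : 0 < n) (hm : 0 < m)
    (π : Config n m → ℝ)
    (hπ : IsStationaryDist (fun _ : Fin n => (1 : ℝ) / n)
      (fun X b => (X.1 b : ℝ) / m) π) :
    (∑ X, π X * ∑ b, ((X.1 b : ℝ) / m) * (X.1 b : ℝ) ^ 2) /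
      (∑ X, π X * ∑ b, ((X.1 b : ℝ) / m) * (X.1 b : ℝ))
      = (2 * m + n - 1) / (n + 1) ∧
    (2 * (m : ℝ) + n - 1) / (n + 1) ≤ 1 + 2 * m / n := by
  obtain ⟨hpos, hnorm, hstat⟩ := hπ
  have hn' : (0:ℝ) < n := by exact_mod_cast hn
  have hm' : (0:ℝ) < m := by exact_mod_cast hm
  have hn1 : (0:ℝ) < (n:ℝ) + 1 := by linarith
  -- the easy inequality
  have hineq : (2 * (m : ℝ) + n - 1) / (n + 1) ≤ 1 + 2 * m / n := by
    rw [div_le_iff₀ hn1]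
    have h2 : (0:ℝ) ≤ 2 * (m:ℝ) / n := by positivity
    have h3 : 2 * (m:ℝ) / n * n = 2 * m := by field_simp
    nlinarith [h2, h3]
  -- positivity of the denominator
  set B := ∑ X : Config n m, π X * ∑ b, ((X.1 b : ℝ) / m) * (X.1 b : ℝ) with hB
  set A := ∑ X : Config n m, π X * ∑ b, ((X.1 b : ℝ) / m) * (X.1 b : ℝ) ^ 2 with hA
  have hgX : ∀ X : Config n m, 1/(m:ℝ) ≤ ∑ b, ((X.1 b : ℝ)/m) * (X.1 b : ℝ) := by
    intro X
    obtain ⟨b0, hb0⟩ : ∃ b, 1 ≤ (X.1 b : ℕ) := by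
      by_contra h
      push_neg at h
      have h0 : ∑ b, (X.1 b : ℕ) = 0 := Finset.sum_eq_zero (fun b _ => by have := h b; omega)
      rw [X.2] at h0
      omega
    have h1 : (1:ℝ) ≤ ((X.1 b0 : ℕ) : ℝ) := by exact_mod_cast hb0
    calc 1/(m:ℝ) ≤ ((X.1 b0 : ℝ)/m) * (X.1 b0 : ℝ) := by
          rw [div_mul_eq_mul_div]
          gcongr
          nlinarith
      _ ≤ ∑ b, ((X.1 b : ℝ)/m) * (X.1 b : ℝ) :=
          Finset.single_le_sum (f := fun b => ((X.1 b : ℝ)/m) * (X.1 b : ℝ))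
            (fun b _ => by positivity) (mem_univ b0)
  have hBpos : 0 < B := by
    have h1 : 1/(m:ℝ) ≤ B := by
      calc 1/(m:ℝ) = ∑ X : Config n m, π X * (1/(m:ℝ)) := by
            rw [← Finset.sum_mul, hnorm, one_mul]
        _ ≤ B := Finset.sum_le_sum (fun X _ =>
            mul_le_mul_of_nonneg_left (hgX X) (hpos X))
    have : (0:ℝ) < 1/(m:ℝ) := by positivity
    linarith
  -- stationarity gives the flow identity
  have hkey : ∑ X : Config n m, π X *
      (∑ b, ((X.1 b : ℝ)/m) *
        ( -(X.1 b : ℝ)^2 + (X.1 b : ℝ)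
          + (2*(X.1 b : ℝ)*((m : ℝ) - (X.1 b : ℝ))
            + (X.1 b : ℝ)*((X.1 b : ℝ)-1))/n)) = 0 := by
    have h1 : ∑ Y : Config n m, π Y * (∑ j, ((Y.1 j : ℝ))^2)
        = ∑ X : Config n m, π X * (∑ Y : Config n m,
            transStep (fun _ : Fin n => (1:ℝ)/n) (fun Z c => (Z.1 c : ℝ)/m) X Y
              * (∑ j, ((Y.1 j : ℝ))^2)) := by
      calc ∑ Y : Config n m, π Y * (∑ j, ((Y.1 j : ℝ))^2)
          = ∑ Y : Config n m, (∑ X : Config n m,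
              π X * transStep (fun _ : Fin n => (1:ℝ)/n) (fun Z c => (Z.1 c : ℝ)/m) X Y)
                * (∑ j, ((Y.1 j : ℝ))^2) := by
            refine Finset.sum_congr rfl (fun Y _ => ?_)
            rw [hstat Y]
        _ = ∑ Y : Config n m, ∑ X : Config n m,
              π X * (transStep (fun _ : Fin n => (1:ℝ)/n) (fun Z c => (Z.1 c : ℝ)/m) X Y
                * (∑ j, ((Y.1 j : ℝ))^2)) := by
            refine Finset.sum_congr rfl (fun Y _ => ?_)
            rw [Finset.sum_mul]
            exact Finset.sum_congr rfl (fun X _ => by ring)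
        _ = _ := by
            rw [Finset.sum_comm]
            exact Finset.sum_congr rfl (fun X _ => (Finset.mul_sum _ _ _).symm)
    rw [Finset.sum_congr rfl (fun X (_ : X ∈ univ) =>
      congrArg (fun z => π X * z) (RandomBallAux.step_moment n m hn hm X))] at h1
    have h2 : ∑ X : Config n m, π X *
        ((∑ j, ((X.1 j : ℝ))^2)
          + ∑ b, ((X.1 b : ℝ)/m) *
            ( -(X.1 b : ℝ)^2 + (X.1 b : ℝ)
              + (2*(X.1 b : ℝ)*((m : ℝ) - (X.1 b : ℝ))
                + (X.1 b : ℝ)*((X.1 b : ℝ)-1))/n))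
        = (∑ X : Config n m, π X * (∑ j, ((X.1 j : ℝ))^2))
          + ∑ X : Config n m, π X *
            (∑ b, ((X.1 b : ℝ)/m) *
              ( -(X.1 b : ℝ)^2 + (X.1 b : ℝ)
                + (2*(X.1 b : ℝ)*((m : ℝ) - (X.1 b : ℝ))
                  + (X.1 b : ℝ)*((X.1 b : ℝ)-1))/n)) := by
      rw [← Finset.sum_add_distrib]
      exact Finset.sum_congr rfl (fun X _ => by ring)
    rw [h2] at h1
    linarith
  -- express hkey linearly in A and B
  have hkey2 : (1 + 1/(n:ℝ)) * A = (1 + (2*(m:ℝ)-1)/n) * B := by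
    have hx : ∀ X : Config n m, π X *
        (∑ b, ((X.1 b : ℝ)/m) *
          ( -(X.1 b : ℝ)^2 + (X.1 b : ℝ)
            + (2*(X.1 b : ℝ)*((m : ℝ) - (X.1 b : ℝ))
              + (X.1 b : ℝ)*((X.1 b : ℝ)-1))/n))
        = (1 + (2*(m:ℝ)-1)/n) * (π X * ∑ b, ((X.1 b : ℝ)/m) * (X.1 b : ℝ))
          - (1 + 1/(n:ℝ)) * (π X * ∑ b, ((X.1 b : ℝ)/m) * (X.1 b : ℝ)^2) := by
      intro X
      rw [Finset.mul_sum, Finset.mul_sum, Finset.mul_sum, Finset.mul_sum, Finset.mul_sum,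
        ← Finset.sum_sub_distrib]
      refine Finset.sum_congr rfl (fun b _ => ?_)
      have hnn : (n:ℝ) ≠ 0 := ne_of_gt hn'
      field_simp
      ring
    rw [Finset.sum_congr rfl (fun X _ => hx X), Finset.sum_sub_distrib,
      ← Finset.mul_sum, ← Finset.mul_sum, ← hA, ← hB] at hkey
    linarith
  refine ⟨?_, hineq⟩
  rw [div_eq_div_iff (ne_of_gt hBpos) (ne_of_gt hn1)]
  push_cast
  have hnn : (n:ℝ) ≠ 0 := ne_of_gt hn'
  field_simp at hkey2
  linear_combination hkey2
end

section
/- In the ball-recycling game with m balls and n bins and any distribution p with all p_i > 0, for any bin configurations X and Y and any recycling strategy, the probability of transitioning from X to Y within min(m,n) steps is at least some ε > 0 independent of the strategy; moreover every configuration can transition to itself in one step. -/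
open Finset

/-- `π` is a stationary distribution of the chain induced by strategy `σ`. -/
def IsStationaryRecycling {n m : ℕ} (p : Fin n → ℝ) (σ : Config n m → Fin n → ℝ)
    (π : Config n m → ℝ) : Prop :=
  (∀ X, 0 ≤ π X) ∧ (∑ X, π X = 1) ∧ (∀ Y, ∑ X, π X * transStep p σ X Y = π Y)

/-- `k`-step transition probability of the chain induced by strategy `σ`. -/
noncomputable def transPow {n m : ℕ} (p : Fin n → ℝ)
    (σ : Config n m → Fin n → ℝ) : ℕ → Config n m → Config n m → ℝ
  | 0 => fun X Y => if X = Y then 1 else 0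
  | k + 1 => fun X Y => ∑ Z, transStep p σ X Z * transPow p σ k Z Y

namespace RecyclingAux

variable {n m : ℕ}

/-- number of nonempty bins -/
def numNE (Z : Config n m) : ℕ := (univ.filter fun j => (Z.1 j : ℕ) ≠ 0).card

lemma throwProb_nonneg {p : Fin n → ℝ} (hp : ∀ i, 0 ≤ p i) (r : ℕ) (d : Fin n → ℕ) :
    0 ≤ throwProb p r d := by
  unfold throwProb
  split
  · exact mul_nonneg (Nat.cast_nonneg _) (Finset.prod_nonneg fun j _ =>
      div_nonneg (pow_nonneg (hp j) _) (Nat.cast_nonneg _))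
  · exact le_refl 0

lemma throwProb_pure (p : Fin n → ℝ) (r : ℕ) (b : Fin n) :
    throwProb p r (fun j => if j = b then r else 0) = p b ^ r := by
  unfold throwProb
  rw [if_pos (by simp)]
  rw [Finset.prod_eq_single b (fun j _ hj => by simp [hj]) (fun h => absurd (mem_univ b) h)]
  have hr : ((r.factorial : ℝ)) ≠ 0 := Nat.cast_ne_zero.2 r.factorial_ne_zero
  field_simp
  simp

lemma transStep_nonneg {p : Fin n → ℝ} (hp : ∀ i, 0 ≤ p i)
    {σ : Config n m → Fin n → ℝ} (hσ : ∀ X b, 0 ≤ σ X b) (X Y : Config n m) :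
    0 ≤ transStep p σ X Y :=
  Finset.sum_nonneg fun b _ => mul_nonneg (hσ X b)
    (by split_ifs with h; exacts [throwProb_nonneg hp _ _, le_refl 0])

lemma transPow_nonneg {p : Fin n → ℝ} (hp : ∀ i, 0 ≤ p i)
    {σ : Config n m → Fin n → ℝ} (hσ : ∀ X b, 0 ≤ σ X b) :
    ∀ (k : ℕ) (X Y : Config n m), 0 ≤ transPow p σ k X Y := by
  intro k
  induction k with
  | zero => intro X Y; unfold transPow; split <;> norm_num
  | succ k ih =>
      intro X Y
      show (0:ℝ) ≤ ∑ Z, transStep p σ X Z * transPow p σ k Z Y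
      exact Finset.sum_nonneg fun Z _ =>
        mul_nonneg (transStep_nonneg hp hσ X Z) (ih Z Y)

/-- Build a configuration from a ℕ-valued vector summing to m. -/
def mkCfg (v : Fin n → ℕ) (h : ∑ j, v j = m) : Config n m :=
  ⟨fun j => ⟨v j, Nat.lt_succ_of_le (h ▸ Finset.single_le_sum (f := v)
      (fun i _ => Nat.zero_le _) (mem_univ j))⟩,
   by simpa using h⟩

lemma dself (Z : Config n m) (b : Fin n) :
    (fun j => (Z.1 j : ℕ) - if j = b then 0 else (Z.1 j : ℕ))
      = fun j => if j = b then (Z.1 b : ℕ) else 0 := by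
  funext j
  by_cases h : j = b <;> simp [h]

/-- merging bin b into bin b' -/
lemma exists_merge (Z : Config n m) {b b' : Fin n} (hbb' : b' ≠ b)
    (hb : (Z.1 b : ℕ) ≠ 0) (hb' : (Z.1 b' : ℕ) ≠ 0) :
    ∃ W : Config n m,
      (∀ j, j ≠ b → (Z.1 j : ℕ) ≤ (W.1 j : ℕ)) ∧
      ((fun j => (W.1 j : ℕ) - if j = b then 0 else (Z.1 j : ℕ))
        = fun j => if j = b' then (Z.1 b : ℕ) else 0) ∧
      numNE W + 1 ≤ numNE Z := by
  set Zn : Fin n → ℕ := fun j => (Z.1 j : ℕ) with hZn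
  set v : Fin n → ℕ := fun j =>
    if j = b then 0 else if j = b' then Zn b + Zn b' else Zn j with hv
  have hsum : ∑ j, v j = m := by
    have h1 : ∀ j, v j = (if j = b' then Zn b else 0) + (if j = b then 0 else Zn j) := by
      intro j
      by_cases h : j = b
      · simp [hv, h, Ne.symm hbb']
      · by_cases h' : j = b' <;> simp [hv, h, h', hbb']
    have h2 : ∀ j, Zn j = (if j = b then Zn b else 0) + (if j = b then 0 else Zn j) := by
      intro j; by_cases h : j = b <;> simp [h]
    calc ∑ j, v j = ∑ j, ((if j = b' then Zn b else 0) + (if j = b then 0 else Zn j)) :=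
          Finset.sum_congr rfl fun j _ => h1 j
      _ = Zn b + ∑ j, (if j = b then 0 else Zn j) := by
          rw [Finset.sum_add_distrib, Finset.sum_ite_eq' univ b' (fun _ => Zn b)]; simp
      _ = ∑ j, ((if j = b then Zn b else 0) + (if j = b then 0 else Zn j)) := by
          rw [Finset.sum_add_distrib, Finset.sum_ite_eq' univ b (fun _ => Zn b)]; simp
      _ = ∑ j, Zn j := Finset.sum_congr rfl fun j _ => (h2 j).symm
      _ = m := Z.2
  refine ⟨mkCfg v hsum, ?_, ?_, ?_⟩
  · intro j hj
    show Zn j ≤ v j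
    by_cases h' : j = b'
    · subst h'; simp [hv, hj]
    · simp [hv, hj, h']
  · funext j
    show v j - (if j = b then 0 else Zn j) = _
    by_cases h : j = b
    · simp [hv, h, Ne.symm hbb']
    · by_cases h' : j = b'
      · subst h'; simp [hv, h]; rfl
      · simp [hv, h, h']
  · have hsub : (univ.filter fun j => ((mkCfg v hsum).1 j : ℕ) ≠ 0)
        ⊆ (univ.filter fun j => (Z.1 j : ℕ) ≠ 0).erase b := by
      intro j hj
      simp only [mem_filter, mem_univ, true_and] at hj
      have hjv : v j ≠ 0 := hj
      rw [Finset.mem_erase]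
      constructor
      · intro h; apply hjv; simp [hv, h]
      · simp only [mem_filter, mem_univ, true_and]
        by_cases h' : j = b'
        · subst h'; exact hb'
        · have hjb : j ≠ b := fun h => hjv (by simp [hv, h])
          exact (by simpa [hv, hjb, h'] using hjv : Zn j ≠ 0)
    have hmem : b ∈ (univ.filter fun j => (Z.1 j : ℕ) ≠ 0) := by
      exact Finset.mem_filter.2 ⟨mem_univ _, hb⟩
    calc numNE (mkCfg v hsum) + 1 ≤ ((univ.filter fun j => (Z.1 j : ℕ) ≠ 0).erase b).card + 1 :=
          Nat.add_le_add_right (Finset.card_le_card hsub) 1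
      _ = numNE Z := by
          have h1 : 1 ≤ (univ.filter fun j => (Z.1 j : ℕ) ≠ 0).card :=
            Finset.card_pos.2 ⟨b, hmem⟩
          unfold numNE
          rw [Finset.card_erase_of_mem hmem]
          omega

end RecyclingAux
namespace RecyclingAux

variable {n m : ℕ}

lemma pow_ge {δ x : ℝ} (hδ0 : 0 ≤ δ) (hδ1 : δ ≤ 1) (hx : δ ≤ x) {r : ℕ} (hr : r ≤ m) :
    δ ^ m ≤ x ^ r :=
  le_trans (pow_le_pow_of_le_one hδ0 hδ1 hr) (pow_le_pow_left₀ hδ0 hx r)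

lemma transStep_self_ge {p : Fin n → ℝ} (hp : ∀ i, 0 < p i)
    {δ : ℝ} (hδ0 : 0 ≤ δ) (hδ1 : δ ≤ 1) (hδp : ∀ j, δ ≤ p j)
    {σ : Config n m → Fin n → ℝ} (hσ : IsStrategy σ) (Z : Config n m) :
    δ ^ m ≤ transStep p σ Z Z := by
  obtain ⟨hσ0, hσ1, hσ2⟩ := hσ
  have h : ∀ b ∈ univ, σ Z b * δ ^ m ≤ σ Z b *
      (if ∀ j, j ≠ b → (Z.1 j : ℕ) ≤ (Z.1 j : ℕ) then
        throwProb p (Z.1 b : ℕ)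
          (fun j => (Z.1 j : ℕ) - if j = b then 0 else (Z.1 j : ℕ))
       else 0) := by
    intro b _
    refine mul_le_mul_of_nonneg_left ?_ (hσ0 Z b)
    rw [if_pos (fun j _ => le_refl _), dself Z b, throwProb_pure]
    exact pow_ge hδ0 hδ1 (hδp b) (Fin.is_le _)
  calc δ ^ m = ∑ b, σ Z b * δ ^ m := by rw [← Finset.sum_mul, hσ1 Z, one_mul]
    _ ≤ transStep p σ Z Z := Finset.sum_le_sum h

lemma key {p : Fin n → ℝ} (hp : ∀ i, 0 < p i) (hm : 0 < m)
    {δ : ℝ} (hδ0 : 0 < δ) (hδ1 : δ ≤ 1) (hδp : ∀ j, δ ≤ p j)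
    {c0 : ℝ} (hc00 : 0 < c0)
    (hc0 : ∀ d : Fin n → ℕ, (∑ j, d j = m) → c0 ≤ throwProb p m d)
    {σ : Config n m → Fin n → ℝ} (hσ : IsStrategy σ) (Y : Config n m) :
    ∀ (k : ℕ), 1 ≤ k → ∀ Z : Config n m, numNE Z ≤ k →
      c0 * (δ ^ m) ^ (k - 1) ≤ transPow p σ k Z Y := by
  obtain ⟨hσ0, hσ1, hσ2⟩ := hσ
  have hpnn : ∀ i, 0 ≤ p i := fun i => (hp i).le
  intro k
  induction k with
  | zero => intro h; omega
  | succ k ih =>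
    intro _ Z hZ
    by_cases hk : k = 0
    · -- base case: one step, Z has a single nonempty bin holding all m balls
      subst hk
      have hex : ∃ j, (Z.1 j : ℕ) ≠ 0 := by
        by_contra h
        push_neg at h
        have h2 := Z.2
        simp only [h] at h2
        simp at h2
        omega
      obtain ⟨j0, hj0⟩ := hex
      have hpos : 0 < numNE Z :=
        Finset.card_pos.2 ⟨j0, Finset.mem_filter.2 ⟨mem_univ _, hj0⟩⟩
      have hZ1 : numNE Z = 1 := le_antisymm hZ hpos
      obtain ⟨a, ha⟩ := Finset.card_eq_one.1 hZ1
      have hamem : a ∈ univ.filter (fun j => (Z.1 j : ℕ) ≠ 0) := by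
        rw [ha]; exact Finset.mem_singleton_self a
      have haZ : (Z.1 a : ℕ) ≠ 0 := (Finset.mem_filter.1 hamem).2
      have hzero : ∀ j, j ≠ a → (Z.1 j : ℕ) = 0 := by
        intro j hj
        by_contra h
        have : j ∈ univ.filter (fun j => (Z.1 j : ℕ) ≠ 0) :=
          Finset.mem_filter.2 ⟨mem_univ _, h⟩
        rw [ha] at this
        exact hj (Finset.mem_singleton.1 this)
      have hZa : (Z.1 a : ℕ) = m := by
        have h := Z.2
        rw [Finset.sum_eq_single a (fun j _ hj => hzero j hj)
          (fun h => absurd (mem_univ a) h)] at h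
        exact h
      have hσa : σ Z a = 1 := by
        rw [← hσ1 Z]
        refine (Finset.sum_eq_single a (fun b _ hb => ?_) (fun h => absurd (mem_univ a) h)).symm
        by_contra hσb
        exact (hσ2 Z b hσb) (hzero b hb)
      have h1 : transPow p σ 1 Z Y = transStep p σ Z Y := by
        show (∑ Z' : Config n m, transStep p σ Z Z' * (if Z' = Y then (1:ℝ) else 0))
          = transStep p σ Z Y
        simp [mul_ite, Finset.sum_ite_eq']
      have hcond : ∀ j, j ≠ a → (Z.1 j : ℕ) ≤ (Y.1 j : ℕ) := by
        intro j hj; rw [hzero j hj]; exact Nat.zero_le _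
      have hd : (fun j => (Y.1 j : ℕ) - if j = a then 0 else (Z.1 j : ℕ))
          = fun j => (Y.1 j : ℕ) := by
        funext j
        by_cases h : j = a
        · simp [h]
        · simp [h, hzero j h]
      have hterm : c0 ≤ σ Z a *
          (if ∀ j, j ≠ a → (Z.1 j : ℕ) ≤ (Y.1 j : ℕ) then
            throwProb p (Z.1 a : ℕ)
              (fun j => (Y.1 j : ℕ) - if j = a then 0 else (Z.1 j : ℕ))
           else 0) := by
        rw [hσa, one_mul, if_pos hcond, hd, hZa]
        exact hc0 _ Y.2
      have hval : c0 ≤ transStep p σ Z Y := by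
        refine le_trans hterm ?_
        show _ ≤ ∑ b, σ Z b *
          (if ∀ j, j ≠ b → (Z.1 j : ℕ) ≤ (Y.1 j : ℕ) then
            throwProb p (Z.1 b : ℕ)
              (fun j => (Y.1 j : ℕ) - if j = b then 0 else (Z.1 j : ℕ))
           else 0)
        refine Finset.single_le_sum (f := fun b => σ Z b *
          (if ∀ j, j ≠ b → (Z.1 j : ℕ) ≤ (Y.1 j : ℕ) then
            throwProb p (Z.1 b : ℕ)
              (fun j => (Y.1 j : ℕ) - if j = b then 0 else (Z.1 j : ℕ))
           else 0)) (fun b _ => mul_nonneg (hσ0 Z b) ?_) (mem_univ a)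
        split_ifs
        · exact throwProb_nonneg hpnn _ _
        · exact le_refl 0
      simpa [h1] using hval
    · -- inductive step
      have hk1 : 1 ≤ k := Nat.one_le_iff_ne_zero.2 hk
      have hWex : ∀ b : Fin n, ∃ W : Config n m, σ Z b ≠ 0 →
          (δ ^ m ≤ (if ∀ j, j ≠ b → (Z.1 j : ℕ) ≤ (W.1 j : ℕ) then
              throwProb p (Z.1 b : ℕ)
                (fun j => (W.1 j : ℕ) - if j = b then 0 else (Z.1 j : ℕ))
             else 0) ∧ numNE W ≤ k) := by
        intro b
        by_cases hσb : σ Z b = 0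
        · exact ⟨Z, fun h => absurd hσb h⟩
        · have hbne : (Z.1 b : ℕ) ≠ 0 := hσ2 Z b hσb
          by_cases hNZ : numNE Z ≤ k
          · refine ⟨Z, fun _ => ⟨?_, hNZ⟩⟩
            rw [if_pos (fun j _ => le_refl _), dself Z b, throwProb_pure]
            exact pow_ge hδ0.le hδ1 (hδp b) (Fin.is_le _)
          · have h2 : 1 < numNE Z := by omega
            have hbmem : b ∈ univ.filter (fun j => (Z.1 j : ℕ) ≠ 0) :=
              Finset.mem_filter.2 ⟨mem_univ b, hbne⟩
            obtain ⟨b', hb'mem, hb'b⟩ := Finset.exists_mem_ne h2 b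
            have hb' : (Z.1 b' : ℕ) ≠ 0 := (Finset.mem_filter.1 hb'mem).2
            obtain ⟨W, hW1, hW2, hW3⟩ := exists_merge Z hb'b hbne hb'
            refine ⟨W, fun _ => ⟨?_, by omega⟩⟩
            rw [if_pos hW1, hW2, throwProb_pure]
            exact pow_ge hδ0.le hδ1 (hδp b') (Fin.is_le _)
      choose W hW using hWex
      set t : Fin n → Config n m → ℝ := fun b W' =>
        if ∀ j, j ≠ b → (Z.1 j : ℕ) ≤ (W'.1 j : ℕ) then
          throwProb p (Z.1 b : ℕ)
            (fun j => (W'.1 j : ℕ) - if j = b then 0 else (Z.1 j : ℕ))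
        else 0 with ht
      have tnn : ∀ b W', 0 ≤ t b W' := by
        intro b W'
        rw [ht]
        dsimp only
        split_ifs
        · exact throwProb_nonneg hpnn _ _
        · exact le_refl 0
      have gnn : ∀ Z', 0 ≤ transPow p σ k Z' Y :=
        fun Z' => transPow_nonneg hpnn hσ0 k Z' Y
      have hBnn : 0 ≤ c0 * (δ ^ m) ^ (k - 1) := by positivity
      have hstep : ∀ b ∈ univ, σ Z b * (δ ^ m * (c0 * (δ ^ m) ^ (k - 1)))
          ≤ σ Z b * ∑ Z' : Config n m, t b Z' * transPow p σ k Z' Y := by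
        intro b _
        by_cases hσb : σ Z b = 0
        · simp [hσb]
        · obtain ⟨h1, h2⟩ := hW b hσb
          have h3 : c0 * (δ ^ m) ^ (k - 1) ≤ transPow p σ k (W b) Y := ih hk1 (W b) h2
          have h4 : δ ^ m * (c0 * (δ ^ m) ^ (k - 1)) ≤ t b (W b) * transPow p σ k (W b) Y :=
            mul_le_mul h1 h3 hBnn (le_trans (by positivity) h1)
          have h5 : t b (W b) * transPow p σ k (W b) Y
              ≤ ∑ Z' : Config n m, t b Z' * transPow p σ k Z' Y :=
            Finset.single_le_sum (fun Z' _ => mul_nonneg (tnn b Z') (gnn Z')) (mem_univ (W b))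
          exact mul_le_mul_of_nonneg_left (h4.trans h5) (hσ0 Z b)
      have hkk : k - 1 + 1 = k := by omega
      calc c0 * (δ ^ m) ^ (k + 1 - 1)
          = (δ ^ m * (c0 * (δ ^ m) ^ (k - 1))) * ∑ b, σ Z b := by
            have hpw : (δ ^ m) ^ k = (δ ^ m) ^ (k - 1) * δ ^ m := by
              rw [← pow_succ, hkk]
            rw [hσ1 Z, mul_one, Nat.add_sub_cancel, hpw]
            ring
        _ = ∑ b, σ Z b * (δ ^ m * (c0 * (δ ^ m) ^ (k - 1))) := by
            rw [Finset.mul_sum]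
            exact Finset.sum_congr rfl fun b _ => mul_comm _ _
        _ ≤ ∑ b, σ Z b * ∑ Z' : Config n m, t b Z' * transPow p σ k Z' Y :=
            Finset.sum_le_sum hstep
        _ = ∑ b, ∑ Z' : Config n m, σ Z b * (t b Z' * transPow p σ k Z' Y) :=
            Finset.sum_congr rfl fun b _ => by rw [Finset.mul_sum]
        _ = ∑ Z' : Config n m, ∑ b, σ Z b * (t b Z' * transPow p σ k Z' Y) :=
            Finset.sum_comm
        _ = ∑ Z' : Config n m, (∑ b, σ Z b * t b Z') * transPow p σ k Z' Y :=
            Finset.sum_congr rfl fun Z' _ => by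
              rw [Finset.sum_mul]
              exact Finset.sum_congr rfl fun b _ => (mul_assoc _ _ _).symm
        _ = transPow p σ (k + 1) Z Y := by
            show _ = ∑ Z' : Config n m, transStep p σ Z Z' * transPow p σ k Z' Y
            exact Finset.sum_congr rfl fun Z' _ => rfl

lemma numNE_le_min (X : Config n m) : numNE X ≤ min m n := by
  have h1 : numNE X ≤ n := le_trans (Finset.card_filter_le _ _) (by simp)
  have h2 : numNE X ≤ m := by
    calc numNE X = ∑ _j ∈ univ.filter (fun j => (X.1 j : ℕ) ≠ 0), 1 :=
          (Finset.card_eq_sum_ones _)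
      _ ≤ ∑ j ∈ univ.filter (fun j => (X.1 j : ℕ) ≠ 0), (X.1 j : ℕ) :=
          Finset.sum_le_sum fun j hj =>
            Nat.one_le_iff_ne_zero.2 (Finset.mem_filter.1 hj).2
      _ ≤ ∑ j, (X.1 j : ℕ) :=
          Finset.sum_le_sum_of_subset (Finset.filter_subset _ _)
      _ = m := X.2
  exact le_min h2 h1

end RecyclingAux
/-- Ergodicity of ball recycling: there is an `ε > 0`, independent of the strategy,
such that for every recycling strategy and all configurations `X, Y`, the chain moves
from `X` to `Y` within `min m n` steps with probability at least `ε`; moreover every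
configuration transitions to itself in one step with positive probability. -/
theorem recycling_ergodic (n m : ℕ) (hn : 0 < n) (hm : 0 < m)
    (p : Fin n → ℝ) (hp : ∀ i, 0 < p i) (hp1 : ∑ i, p i = 1) :
    ∃ ε : ℝ, 0 < ε ∧
      ∀ σ : Config n m → Fin n → ℝ, IsStrategy σ →
        (∀ X Y : Config n m, ∃ k : ℕ, 1 ≤ k ∧ k ≤ min m n ∧ ε ≤ transPow p σ k X Y) ∧
        (∀ X : Config n m, 0 < transStep p σ X X) := by
  classical
  set δ : ℝ := ∏ i, p i with hδ
  have hδ0 : 0 < δ := Finset.prod_pos (fun i _ => hp i)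
  have hple : ∀ i, p i ≤ 1 := fun i => by
    rw [← hp1]
    exact Finset.single_le_sum (fun j _ => (hp j).le) (mem_univ i)
  have hδp : ∀ j, δ ≤ p j := by
    intro j
    have herase : ∏ i ∈ univ.erase j, p i ≤ 1 :=
      Finset.prod_le_one (fun i _ => (hp i).le) (fun i _ => hple i)
    calc δ = p j * ∏ i ∈ univ.erase j, p i := (Finset.mul_prod_erase univ p (mem_univ j)).symm
      _ ≤ p j * 1 := mul_le_mul_of_nonneg_left herase (hp j).le
      _ = p j := mul_one _
  have hδ1 : δ ≤ 1 := (hδp ⟨0, hn⟩).trans (hple _)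
  set c0 : ℝ := (m.factorial : ℝ) * (δ ^ m / (m.factorial : ℝ)) ^ n with hc0def
  have hfac : (0:ℝ) < (m.factorial : ℝ) := Nat.cast_pos.2 m.factorial_pos
  have hc00 : 0 < c0 :=
    mul_pos hfac (pow_pos (div_pos (pow_pos hδ0 m) hfac) n)
  have hc0 : ∀ d : Fin n → ℕ, (∑ j, d j = m) → c0 ≤ throwProb p m d := by
    intro d hd
    unfold throwProb
    rw [if_pos hd, hc0def]
    refine mul_le_mul_of_nonneg_left ?_ (Nat.cast_nonneg _)
    have h1 : (δ ^ m / (m.factorial : ℝ)) ^ n = ∏ _j : Fin n, δ ^ m / (m.factorial : ℝ) := by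
      rw [Finset.prod_const, Finset.card_univ, Fintype.card_fin]
    rw [h1]
    refine Finset.prod_le_prod (fun j _ => div_nonneg (pow_nonneg hδ0.le m) hfac.le)
      (fun j _ => ?_)
    have hdjm : d j ≤ m := hd ▸ Finset.single_le_sum (f := d)
      (fun i _ => Nat.zero_le _) (mem_univ j)
    exact div_le_div₀ (pow_nonneg (hp j).le _)
      (RecyclingAux.pow_ge hδ0.le hδ1 (hδp j) hdjm)
      (Nat.cast_pos.2 (d j).factorial_pos)
      (Nat.cast_le.2 (Nat.factorial_le hdjm))
  refine ⟨c0 * (δ ^ m) ^ (min m n - 1), mul_pos hc00 (pow_pos (pow_pos hδ0 m) _), ?_⟩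
  intro σ hσ
  constructor
  · intro X Y
    refine ⟨min m n, le_min hm hn, le_refl _, ?_⟩
    exact RecyclingAux.key hp hm hδ0 hδ1 hδp hc00 hc0 hσ Y (min m n) (le_min hm hn) X
      (RecyclingAux.numNE_le_min X)
  · intro X
    exact lt_of_lt_of_le (pow_pos hδ0 m)
      (RecyclingAux.transStep_self_ge hp hδ0.le hδ1 hδp hσ X)
end
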